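/- The number of perfect matchings of a bipartite graph with parts of size n and maximum degree at most 2 is at most 2^⌊n/2⌋, and this bound is attained for every even n. -/

import Mathlib

instance subgraph_finite {V : Type} [Finite V] (G : SimpleGraph V) : Finite G.Subgraph :=
  Finite.of_injective (fun M => (M.verts, M.Adj))
    (fun M N h => by
      obtain ⟨h1, h2⟩ := Prod.mk.injEq _ _ _ _ ▸ h
      exact SimpleGraph.Subgraph.ext h1 h2)

lemma matching_adj_iff {V : Type} {G : SimpleGraph V} {M : G.Subgraph} (hM : M.IsMatching)
    {x y : V} (hxy : M.Adj x y) : ∀ z, M.Adj x z ↔ z = y :=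
  fun _ => ⟨fun hz => (hM (M.edge_vert hxy)).unique hz hxy, fun hz => hz ▸ hxy⟩

lemma delete_matching {V : Type} {G : SimpleGraph V} {M : G.Subgraph} (hM : M.IsMatching)
    {F : Set V} (hF : ∀ x ∈ F, ∀ y, M.Adj x y → y ∈ F) :
    (M.deleteVerts F).IsMatching := by
  intro v hv
  rw [SimpleGraph.Subgraph.deleteVerts_verts] at hv
  obtain ⟨w, hw, huniq⟩ := hM hv.1
  have hwF : w ∉ F := fun hwF => hv.2 (hF w hwF v hw.symm)
  refine ⟨w, ?_, fun y hy => huniq y ?_⟩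
  · show (M.deleteVerts F).Adj v w
    rw [SimpleGraph.Subgraph.deleteVerts_adj]
    exact ⟨hv.1, hv.2, M.edge_vert hw.symm, hwF, hw⟩
  · have hy' : (M.deleteVerts F).Adj v y := hy
    rw [SimpleGraph.Subgraph.deleteVerts_adj] at hy'
    exact hy'.2.2.2.2

lemma delete_inj {V : Type} {G : SimpleGraph V} {M₁ M₂ : G.Subgraph} {F : Set V}
    (hv : M₁.verts = M₂.verts)
    (hagree : ∀ x ∈ F, ∀ y, (M₁.Adj x y ↔ M₂.Adj x y))
    (hdel : M₁.deleteVerts F = M₂.deleteVerts F) : M₁ = M₂ := by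
  apply SimpleGraph.Subgraph.ext hv
  ext x y
  by_cases hx : x ∈ F
  · exact hagree x hx y
  by_cases hy : y ∈ F
  · constructor <;> intro h
    · exact ((hagree y hy x).mp h.symm).symm
    · exact ((hagree y hy x).mpr h.symm).symm
  constructor <;> intro h
  · have : (M₁.deleteVerts F).Adj x y := by
      rw [SimpleGraph.Subgraph.deleteVerts_adj]
      exact ⟨M₁.edge_vert h, hx, M₁.edge_vert h.symm, hy, h⟩
    rw [hdel, SimpleGraph.Subgraph.deleteVerts_adj] at this
    exact this.2.2.2.2
  · have : (M₂.deleteVerts F).Adj x y := by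
      rw [SimpleGraph.Subgraph.deleteVerts_adj]
      exact ⟨M₂.edge_vert h, hx, M₂.edge_vert h.symm, hy, h⟩
    rw [← hdel, SimpleGraph.Subgraph.deleteVerts_adj] at this
    exact this.2.2.2.2

/-- The main branch bound: if `a` is matched to `b` and `b'` is another neighbor of `a`
in `U`, then counting matchings on `U` with edge `a-b` reduces by two `A`-vertices. -/
lemma branch_count {V : Type} [Fintype V] {G : SimpleGraph V} {A : Set V}
    (hbip : ∀ v w, G.Adj v w → (v ∈ A ↔ w ∉ A))
    (hdeg : ∀ v, (G.neighborSet v).ncard ≤ 2)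
    {U : Set V} {k : ℕ} (hUA : (U ∩ A).ncard = k + 2) (hUB : (U \ A).ncard = k + 2)
    {a b b' : V} (haU : a ∈ U) (haA : a ∈ A) (hab : G.Adj a b) (hab' : G.Adj a b')
    (hbU : b ∈ U) (hb'U : b' ∈ U) (hne : b ≠ b')
    (IH2 : ∀ (U' : Set V), (U' ∩ A).ncard = k → (U' \ A).ncard = k →
      ({M : G.Subgraph | M.IsMatching ∧ M.verts = U'}).ncard ≤ 2 ^ (k / 2)) :
    ({M : G.Subgraph | (M.IsMatching ∧ M.verts = U) ∧ M.Adj a b}).ncard ≤ 2 ^ (k / 2) := by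
  have hbA : b ∉ A := (hbip a b hab).mp haA
  have hb'A : b' ∉ A := (hbip a b' hab').mp haA
  -- the set of potential partners of b' other than a
  set t : Set V := G.neighborSet b' \ {a} with ht
  have htcard : t.ncard ≤ 1 := by
    have h1 : t.ncard + 1 = (G.neighborSet b').ncard :=
      Set.ncard_diff_singleton_add_one hab'.symm (Set.toFinite _)
    have h2 := hdeg b'
    omega
  by_cases hex : ∃ a2, a2 ∈ t ∩ U
  · obtain ⟨a2, ⟨ha2nb, ha2a⟩, ha2U⟩ := hex
    have ha2b' : G.Adj b' a2 := ha2nb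
    have ha2ne : a2 ≠ a := fun h => ha2a h
    have ha2A : a2 ∈ A := (hbip a2 b' ha2b'.symm).mpr hb'A
    -- forced partner of b'
    have hforced : ∀ M : G.Subgraph, M.IsMatching → M.verts = U → M.Adj a b → M.Adj b' a2 := by
      intro M hM hMv hMab
      obtain ⟨y, hy, -⟩ := hM (show b' ∈ M.verts from hMv ▸ hb'U)
      have hya : y ≠ a := by
        rintro rfl
        exact hne ((matching_adj_iff hM hMab b').mp hy.symm).symm
      have hyt : y ∈ t := ⟨hy.adj_sub, hya⟩
      have : y = a2 := (Set.ncard_le_one (Set.toFinite t)).mp htcard y hyt a2 ⟨ha2nb, ha2a⟩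
      exact this ▸ hy
    set F : Set V := {a, b, a2, b'} with hFdef
    have hmemF : ∀ x, x ∈ F ↔ x = a ∨ x = b ∨ x = a2 ∨ x = b' := by
      intro x
      simp [hFdef]
    have hclose : ∀ M : G.Subgraph, M.IsMatching → M.verts = U → M.Adj a b →
        ∀ x ∈ F, ∀ y, M.Adj x y → y ∈ F := by
      intro M hM hMv hMab x hx y hxy
      have hb'a2 := hforced M hM hMv hMab
      rw [hmemF] at hx
      rw [hmemF]
      rcases hx with rfl | rfl | rfl | rfl
      · exact Or.inr (Or.inl ((matching_adj_iff hM hMab y).mp hxy))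
      · exact Or.inl ((matching_adj_iff hM hMab.symm y).mp hxy)
      · exact Or.inr (Or.inr (Or.inr ((matching_adj_iff hM hb'a2.symm y).mp hxy)))
      · exact Or.inr (Or.inr (Or.inl ((matching_adj_iff hM hb'a2 y).mp hxy)))
    have hagree : ∀ M₁ M₂ : G.Subgraph, M₁.IsMatching → M₂.IsMatching →
        M₁.Adj a b → M₂.Adj a b → M₁.Adj b' a2 → M₂.Adj b' a2 →
        ∀ x ∈ F, ∀ y, (M₁.Adj x y ↔ M₂.Adj x y) := by
      intro M₁ M₂ h1 h2 h1ab h2ab h1f h2f x hx y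
      rw [hmemF] at hx
      rcases hx with rfl | rfl | rfl | rfl
      · rw [matching_adj_iff h1 h1ab y, matching_adj_iff h2 h2ab y]
      · rw [matching_adj_iff h1 h1ab.symm y, matching_adj_iff h2 h2ab.symm y]
      · rw [matching_adj_iff h1 h1f.symm y, matching_adj_iff h2 h2f.symm y]
      · rw [matching_adj_iff h1 h1f y, matching_adj_iff h2 h2f y]
    have hsplitA : (U \ F) ∩ A = ((U ∩ A) \ {a}) \ {a2} := by
      ext x
      simp only [Set.mem_diff, Set.mem_inter_iff, Set.mem_singleton_iff, hmemF]
      constructor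
      · rintro ⟨⟨hxU, hxF⟩, hxA⟩
        exact ⟨⟨⟨hxU, hxA⟩, fun h => hxF (Or.inl h)⟩,
          fun h => hxF (Or.inr (Or.inr (Or.inl h)))⟩
      · rintro ⟨⟨⟨hxU, hxA⟩, hxa⟩, hxa2⟩
        refine ⟨⟨hxU, ?_⟩, hxA⟩
        rintro (rfl | rfl | rfl | rfl)
        exacts [hxa rfl, hbA hxA, hxa2 rfl, hb'A hxA]
    have hsplitB : (U \ F) \ A = ((U \ A) \ {b}) \ {b'} := by
      ext x
      simp only [Set.mem_diff, Set.mem_singleton_iff, hmemF]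
      constructor
      · rintro ⟨⟨hxU, hxF⟩, hxA⟩
        exact ⟨⟨⟨hxU, hxA⟩, fun h => hxF (Or.inr (Or.inl h))⟩,
          fun h => hxF (Or.inr (Or.inr (Or.inr h)))⟩
      · rintro ⟨⟨⟨hxU, hxA⟩, hxb⟩, hxb'⟩
        refine ⟨⟨hxU, ?_⟩, hxA⟩
        rintro (rfl | rfl | rfl | rfl)
        exacts [hxA haA, hxb rfl, hxA ha2A, hxb' rfl]
    have hmem1 : a ∈ U ∩ A := ⟨haU, haA⟩
    have hmem2 : a2 ∈ (U ∩ A) \ {a} := ⟨⟨ha2U, ha2A⟩, fun h => ha2ne h⟩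
    have hmem3 : b ∈ U \ A := ⟨hbU, hbA⟩
    have hmem4 : b' ∈ (U \ A) \ {b} := ⟨⟨hb'U, hb'A⟩, fun h => hne h.symm⟩
    have hA' : ((U \ F) ∩ A).ncard = k := by
      rw [hsplitA, Set.ncard_diff_singleton_of_mem hmem2,
        Set.ncard_diff_singleton_of_mem hmem1, hUA]
      omega
    have hB' : ((U \ F) \ A).ncard = k := by
      rw [hsplitB, Set.ncard_diff_singleton_of_mem hmem4,
        Set.ncard_diff_singleton_of_mem hmem3, hUB]
      omega
    have hmaps : ∀ M ∈ {M : G.Subgraph | (M.IsMatching ∧ M.verts = U) ∧ M.Adj a b},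
        M.deleteVerts F ∈ {M : G.Subgraph | M.IsMatching ∧ M.verts = U \ F} := by
      rintro M ⟨⟨hM, hMv⟩, hMab⟩
      exact ⟨delete_matching hM (hclose M hM hMv hMab),
        by rw [SimpleGraph.Subgraph.deleteVerts_verts, hMv]⟩
    have hinj : Set.InjOn (fun M : G.Subgraph => M.deleteVerts F)
        {M : G.Subgraph | (M.IsMatching ∧ M.verts = U) ∧ M.Adj a b} := by
      rintro M₁ ⟨⟨h1, h1v⟩, h1ab⟩ M₂ ⟨⟨h2, h2v⟩, h2ab⟩ hdel
      exact delete_inj (h1v.trans h2v.symm)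
        (hagree M₁ M₂ h1 h2 h1ab h2ab (hforced M₁ h1 h1v h1ab) (hforced M₂ h2 h2v h2ab)) hdel
    calc ({M : G.Subgraph | (M.IsMatching ∧ M.verts = U) ∧ M.Adj a b}).ncard
        ≤ ({M : G.Subgraph | M.IsMatching ∧ M.verts = U \ F}).ncard :=
          Set.ncard_le_ncard_of_injOn _ hmaps hinj (Set.toFinite _)
      _ ≤ 2 ^ (k / 2) := IH2 (U \ F) hA' hB'
  · have hempty : {M : G.Subgraph | (M.IsMatching ∧ M.verts = U) ∧ M.Adj a b} = ∅ := by
      ext M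
      simp only [Set.mem_setOf_eq, Set.mem_empty_iff_false, iff_false]
      rintro ⟨⟨hM, hMv⟩, hMab⟩
      obtain ⟨y, hy, -⟩ := hM (show b' ∈ M.verts from hMv ▸ hb'U)
      have hya : y ≠ a := by
        rintro rfl
        exact hne ((matching_adj_iff hM hMab b').mp hy.symm).symm
      exact hex ⟨y, ⟨hy.adj_sub, hya⟩, hMv ▸ M.edge_vert hy.symm⟩
    rw [hempty]
    simp

lemma key {V : Type} [Fintype V] {G : SimpleGraph V} {A : Set V}
    (hbip : ∀ v w, G.Adj v w → (v ∈ A ↔ w ∉ A))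
    (hdeg : ∀ v, (G.neighborSet v).ncard ≤ 2) :
    ∀ k (U : Set V), (U ∩ A).ncard = k → (U \ A).ncard = k →
      ({M : G.Subgraph | M.IsMatching ∧ M.verts = U}).ncard ≤ 2 ^ (k / 2) := by
  intro k
  induction k using Nat.strong_induction_on with
  | _ k IH =>
  obtain _ | (_ | k) := k
  · -- k = 0
    intro U hUA hUB
    have hU : U = ∅ := by
      ext x
      simp only [Set.mem_empty_iff_false, iff_false]
      intro hx
      by_cases hxA : x ∈ A
      · have : (x : V) ∈ U ∩ A := ⟨hx, hxA⟩
        rw [Set.ncard_eq_zero (Set.toFinite _)] at hUA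
        rw [hUA] at this
        exact this
      · have : (x : V) ∈ U \ A := ⟨hx, hxA⟩
        rw [Set.ncard_eq_zero (Set.toFinite _)] at hUB
        rw [hUB] at this
        exact this
    have : ({M : G.Subgraph | M.IsMatching ∧ M.verts = U}).ncard ≤ 1 := by
      rw [Set.ncard_le_one (Set.toFinite _)]
      rintro M₁ ⟨h1, h1v⟩ M₂ ⟨h2, h2v⟩
      apply SimpleGraph.Subgraph.ext (h1v.trans h2v.symm)
      ext x y
      constructor <;> intro h
      · exact absurd (h1v ▸ M₁.edge_vert h) (by rw [hU]; exact fun h => h)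
      · exact absurd (h2v ▸ M₂.edge_vert h) (by rw [hU]; exact fun h => h)
    simpa using this
  · -- k = 1
    intro U hUA hUB
    obtain ⟨a, hA⟩ := Set.ncard_eq_one.mp hUA
    obtain ⟨b, hB⟩ := Set.ncard_eq_one.mp hUB
    have haUA : a ∈ U ∩ A := by rw [hA]; rfl
    have hbUB : b ∈ U \ A := by rw [hB]; rfl
    have hforced : ∀ M : G.Subgraph, M.IsMatching → M.verts = U → M.Adj a b := by
      intro M hM hMv
      obtain ⟨y, hy, -⟩ := hM (show a ∈ M.verts from hMv ▸ haUA.1)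
      have hyU : y ∈ U := hMv ▸ M.edge_vert hy.symm
      have hyA : y ∉ A := (hbip a y hy.adj_sub).mp haUA.2
      have : y ∈ U \ A := ⟨hyU, hyA⟩
      rw [hB] at this
      rwa [this] at hy
    have hUab : U ⊆ ({a, b} : Set V) := by
      intro x hx
      by_cases hxA : x ∈ A
      · have : (x : V) ∈ U ∩ A := ⟨hx, hxA⟩
        rw [hA] at this
        exact Or.inl this
      · have : (x : V) ∈ U \ A := ⟨hx, hxA⟩
        rw [hB] at this
        exact Or.inr this
    have : ({M : G.Subgraph | M.IsMatching ∧ M.verts = U}).ncard ≤ 1 := by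
      rw [Set.ncard_le_one (Set.toFinite _)]
      rintro M₁ ⟨h1, h1v⟩ M₂ ⟨h2, h2v⟩
      have h1ab := hforced M₁ h1 h1v
      have h2ab := hforced M₂ h2 h2v
      refine delete_inj (F := ({a, b} : Set V)) (h1v.trans h2v.symm) ?_ ?_
      · intro x hx y
        rcases hx with rfl | rfl
        · rw [matching_adj_iff h1 h1ab y, matching_adj_iff h2 h2ab y]
        · rw [matching_adj_iff h1 h1ab.symm y, matching_adj_iff h2 h2ab.symm y]
      · apply SimpleGraph.Subgraph.ext
        · rw [SimpleGraph.Subgraph.deleteVerts_verts, SimpleGraph.Subgraph.deleteVerts_verts,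
            h1v, h2v]
        · ext x y
          constructor <;> intro h
          · rw [SimpleGraph.Subgraph.deleteVerts_adj] at h
            exact absurd (hUab (h1v ▸ h.1)) h.2.1
          · rw [SimpleGraph.Subgraph.deleteVerts_adj] at h
            exact absurd (hUab (h2v ▸ h.1)) h.2.1
    simpa using this
  · -- k + 2
    intro U hUA hUB
    have hne0 : (U ∩ A).ncard ≠ 0 := by omega
    obtain ⟨a, haU, haA⟩ := Set.nonempty_of_ncard_ne_zero hne0
    set s : Set V := G.neighborSet a ∩ U with hsdef
    have hscard : s.ncard ≤ 2 :=
      le_trans (Set.ncard_le_ncard Set.inter_subset_left (Set.toFinite _)) (hdeg a)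
    have hpart : ∀ M : G.Subgraph, M.IsMatching → M.verts = U → ∃ y, M.Adj a y ∧ y ∈ s := by
      intro M hM hMv
      obtain ⟨y, hy, -⟩ := hM (show a ∈ M.verts from hMv ▸ haU)
      exact ⟨y, hy, hy.adj_sub, hMv ▸ M.edge_vert hy.symm⟩
    rcases Set.eq_empty_or_nonempty s with hs | ⟨b1, hb1⟩
    · have hempty : {M : G.Subgraph | M.IsMatching ∧ M.verts = U} = ∅ := by
        ext M
        simp only [Set.mem_setOf_eq, Set.mem_empty_iff_false, iff_false]
        rintro ⟨hM, hMv⟩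
        obtain ⟨y, -, hys⟩ := hpart M hM hMv
        rw [hs] at hys
        exact hys
      rw [hempty]
      simp
    · have hb1adj : G.Adj a b1 := hb1.1
      have hb1U : b1 ∈ U := hb1.2
      have hb1A : b1 ∉ A := (hbip a b1 hb1adj).mp haA
      by_cases hb2e : ∃ b2 ∈ s, b2 ≠ b1
      · -- two neighbors
        obtain ⟨b2, hb2, hb2ne⟩ := hb2e
        have hb2adj : G.Adj a b2 := hb2.1
        have hb2U : b2 ∈ U := hb2.2
        have hseq : ({b1, b2} : Set V) = s := by
          apply Set.eq_of_subset_of_ncard_le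
          · rintro x (rfl | rfl)
            exacts [hb1, hb2]
          · rw [Set.ncard_pair (Ne.symm hb2ne)]
            exact hscard
          · exact Set.toFinite _
        have IH2 : ∀ (U' : Set V), (U' ∩ A).ncard = k → (U' \ A).ncard = k →
            ({M : G.Subgraph | M.IsMatching ∧ M.verts = U'}).ncard ≤ 2 ^ (k / 2) :=
          fun U' => IH k (by omega) U'
        have hc1 := branch_count hbip hdeg hUA hUB haU haA hb1adj hb2adj hb1U hb2U
          (Ne.symm hb2ne) IH2
        have hc2 := branch_count hbip hdeg hUA hUB haU haA hb2adj hb1adj hb2U hb1U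
          hb2ne IH2
        have hsub : {M : G.Subgraph | M.IsMatching ∧ M.verts = U} ⊆
            {M : G.Subgraph | (M.IsMatching ∧ M.verts = U) ∧ M.Adj a b1} ∪
            {M : G.Subgraph | (M.IsMatching ∧ M.verts = U) ∧ M.Adj a b2} := by
          rintro M ⟨hM, hMv⟩
          obtain ⟨y, hy, hys⟩ := hpart M hM hMv
          rw [← hseq] at hys
          rcases hys with rfl | rfl
          · exact Or.inl ⟨⟨hM, hMv⟩, hy⟩
          · exact Or.inr ⟨⟨hM, hMv⟩, hy⟩
        calc ({M : G.Subgraph | M.IsMatching ∧ M.verts = U}).ncard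
            ≤ _ := Set.ncard_le_ncard hsub (Set.toFinite _)
          _ ≤ _ := Set.ncard_union_le _ _
          _ ≤ 2 ^ (k / 2) + 2 ^ (k / 2) := add_le_add hc1 hc2
          _ = 2 ^ (k / 2 + 1) := by rw [pow_succ]; omega
          _ = 2 ^ ((k + 2) / 2) := by congr 1; omega
      · -- single neighbor
        push_neg at hb2e
        have hforced : ∀ M : G.Subgraph, M.IsMatching → M.verts = U → M.Adj a b1 := by
          intro M hM hMv
          obtain ⟨y, hy, hys⟩ := hpart M hM hMv
          rwa [hb2e y hys] at hy
        set F : Set V := {a, b1} with hFdef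
        have hclose : ∀ M : G.Subgraph, M.IsMatching → M.verts = U →
            ∀ x ∈ F, ∀ y, M.Adj x y → y ∈ F := by
          intro M hM hMv x hx y hxy
          have hab := hforced M hM hMv
          rcases hx with rfl | rfl
          · exact Or.inr ((matching_adj_iff hM hab y).mp hxy)
          · exact Or.inl ((matching_adj_iff hM hab.symm y).mp hxy)
        have hsplitA : (U \ F) ∩ A = (U ∩ A) \ {a} := by
          ext x
          simp only [Set.mem_diff, Set.mem_inter_iff, Set.mem_singleton_iff, hFdef,
            Set.mem_insert_iff]
          constructor
          · rintro ⟨⟨hxU, hxF⟩, hxA⟩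
            exact ⟨⟨hxU, hxA⟩, fun h => hxF (Or.inl h)⟩
          · rintro ⟨⟨hxU, hxA⟩, hxa⟩
            refine ⟨⟨hxU, ?_⟩, hxA⟩
            rintro (rfl | rfl)
            exacts [hxa rfl, hb1A hxA]
        have hsplitB : (U \ F) \ A = (U \ A) \ {b1} := by
          ext x
          simp only [Set.mem_diff, Set.mem_singleton_iff, hFdef, Set.mem_insert_iff]
          constructor
          · rintro ⟨⟨hxU, hxF⟩, hxA⟩
            exact ⟨⟨hxU, hxA⟩, fun h => hxF (Or.inr h)⟩
          · rintro ⟨⟨hxU, hxA⟩, hxb⟩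
            refine ⟨⟨hxU, ?_⟩, hxA⟩
            rintro (rfl | rfl)
            exacts [hxA haA, hxb rfl]
        have hmem1 : a ∈ U ∩ A := ⟨haU, haA⟩
        have hmem3 : b1 ∈ U \ A := ⟨hb1U, hb1A⟩
        have hA' : ((U \ F) ∩ A).ncard = k + 1 := by
          rw [hsplitA, Set.ncard_diff_singleton_of_mem hmem1, hUA]
          omega
        have hB' : ((U \ F) \ A).ncard = k + 1 := by
          rw [hsplitB, Set.ncard_diff_singleton_of_mem hmem3, hUB]
          omega
        have hmaps : ∀ M ∈ {M : G.Subgraph | M.IsMatching ∧ M.verts = U},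
            M.deleteVerts F ∈ {M : G.Subgraph | M.IsMatching ∧ M.verts = U \ F} := by
          rintro M ⟨hM, hMv⟩
          exact ⟨delete_matching hM (hclose M hM hMv),
            by rw [SimpleGraph.Subgraph.deleteVerts_verts, hMv]⟩
        have hinj : Set.InjOn (fun M : G.Subgraph => M.deleteVerts F)
            {M : G.Subgraph | M.IsMatching ∧ M.verts = U} := by
          rintro M₁ ⟨h1, h1v⟩ M₂ ⟨h2, h2v⟩ hdel
          have h1ab := hforced M₁ h1 h1v
          have h2ab := hforced M₂ h2 h2v
          refine delete_inj (h1v.trans h2v.symm) ?_ hdel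
          intro x hx y
          rcases hx with rfl | rfl
          · rw [matching_adj_iff h1 h1ab y, matching_adj_iff h2 h2ab y]
          · rw [matching_adj_iff h1 h1ab.symm y, matching_adj_iff h2 h2ab.symm y]
        calc ({M : G.Subgraph | M.IsMatching ∧ M.verts = U}).ncard
            ≤ ({M : G.Subgraph | M.IsMatching ∧ M.verts = U \ F}).ncard :=
              Set.ncard_le_ncard_of_injOn _ hmaps hinj (Set.toFinite _)
          _ ≤ 2 ^ ((k + 1) / 2) := IH (k + 1) (by omega) _ hA' hB'
          _ ≤ 2 ^ ((k + 2) / 2) := Nat.pow_le_pow_right (by norm_num) (by omega)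

section Part2
variable (m : ℕ)

def cellF (i : Fin (2 * m)) : Fin m := ⟨i.val / 2, by have := i.isLt; omega⟩

def flipF (i : Fin (2 * m)) : Fin (2 * m) :=
  ⟨if i.val % 2 = 0 then i.val + 1 else i.val - 1, by have := i.isLt; split <;> omega⟩

def dblF (j : Fin m) : Fin (2 * m) := ⟨2 * j.val, by have := j.isLt; omega⟩

lemma cell_flip (i : Fin (2 * m)) : cellF m (flipF m i) = cellF m i := by
  have := i.isLt
  simp only [cellF, flipF]
  apply Fin.ext
  simp only
  split <;> omega

lemma flip_ne (i : Fin (2 * m)) : flipF m i ≠ i := by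
  have := i.isLt
  simp only [flipF, Ne, Fin.ext_iff]
  split <;> omega

lemma cell_cases {m : ℕ} {i j : Fin (2 * m)} (h : cellF m i = cellF m j) :
    j = i ∨ j = flipF m i := by
  have hi := i.isLt
  have hj := j.isLt
  rw [Fin.ext_iff] at h
  simp only [cellF] at h
  rw [Fin.ext_iff, Fin.ext_iff]
  simp only [flipF]
  split <;> omega

lemma cell_dbl (j : Fin m) : cellF m (dblF m j) = j := by
  apply Fin.ext
  simp only [cellF, dblF]
  omega

def GG : SimpleGraph (Bool × Fin (2 * m)) where
  Adj p q := p.1 ≠ q.1 ∧ cellF m p.2 = cellF m q.2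
  symm := ⟨fun p q h => ⟨h.1.symm, h.2.symm⟩⟩
  loopless := ⟨fun p h => h.1 rfl⟩

lemma GG_adj (p q : Bool × Fin (2 * m)) :
    (GG m).Adj p q ↔ p.1 ≠ q.1 ∧ cellF m p.2 = cellF m q.2 := Iff.rfl

def MF (f : Fin m → Bool) : (GG m).Subgraph where
  verts := Set.univ
  Adj p q := p.1 ≠ q.1 ∧ cellF m p.2 = cellF m q.2 ∧ (p.2 = q.2 ↔ f (cellF m p.2) = true)
  adj_sub := fun h => ⟨h.1, h.2.1⟩
  edge_vert := fun _ => trivial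
  symm := ⟨fun p q ⟨h1, h2, h3⟩ =>
    ⟨h1.symm, h2.symm, by rw [← h2, eq_comm]; exact h3⟩⟩

lemma bool_resolve {b c : Bool} (h : b ≠ c) : c = !b := by
  cases b <;> cases c <;> simp_all

lemma MF_pm (f : Fin m → Bool) : (MF m f).IsPerfectMatching := by
  constructor
  · rintro ⟨b, i⟩ -
    by_cases hf : f (cellF m i) = true
    · refine ⟨(!b, i), ⟨by simp, rfl, by simp [hf]⟩, ?_⟩
      rintro ⟨c, j⟩ ⟨h1, h2, h3⟩
      have hj : i = j := h3.mpr hf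
      have hc : c = !b := bool_resolve h1
      rw [hc, ← hj]
    · refine ⟨(!b, flipF m i), ⟨by simp, (cell_flip m i).symm, ?_⟩, ?_⟩
      · exact iff_of_false (fun h => flip_ne m i h.symm) hf
      · rintro ⟨c, j⟩ ⟨h1, h2, h3⟩
        have hc : c = !b := bool_resolve h1
        have : j ≠ i := fun h => hf (h3.mp h.symm)
        rcases cell_cases h2 with rfl | rfl
        · exact absurd rfl this
        · rw [hc]
  · intro v
    trivial

lemma flipF_flipF (i : Fin (2 * m)) : flipF m (flipF m i) = i := by
  have := i.isLt
  simp only [flipF]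
  apply Fin.ext
  simp only
  split <;> split <;> omega

lemma matching_adj_iff' {V : Type} {G : SimpleGraph V} {M : G.Subgraph} (hM : M.IsMatching)
    {x y : V} (hxy : M.Adj x y) : ∀ z, M.Adj x z ↔ z = y :=
  fun _ => ⟨fun hz => (hM (M.edge_vert hxy)).unique hz hxy, fun hz => hz ▸ hxy⟩

lemma pm_partner {M : (GG m).Subgraph} (hM : M.IsPerfectMatching) (d : Bool)
    (x : Fin (2 * m)) : ∃ y, M.Adj (d, x) ((!d), y) ∧ cellF m y = cellF m x := by
  obtain ⟨z, hz, -⟩ := hM.1 (hM.2 (d, x))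
  obtain ⟨c, y⟩ := z
  have hG := M.adj_sub hz
  rw [GG_adj] at hG
  have hc : c = !d := bool_resolve hG.1
  subst hc
  exact ⟨y, hz, hG.2.symm⟩

lemma pm_adj {M : (GG m).Subgraph} (hM : M.IsPerfectMatching) (b : Bool) (i : Fin (2 * m))
    (c : Bool) (j : Fin (2 * m)) :
    M.Adj (b, i) (c, j) ↔ b ≠ c ∧ cellF m i = cellF m j ∧
      (i = j ↔ M.Adj (false, dblF m (cellF m i)) (true, dblF m (cellF m i))) := by
  set j0 := cellF m i with hj0
  set u := dblF m j0 with hu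
  set w := flipF m u with hw
  have hcu : cellF m u = j0 := cell_dbl m j0
  have hcw : cellF m w = j0 := (cell_flip m u).trans hcu
  have huw : w ≠ u := flip_ne m u
  have hicases : i = u ∨ i = w := cell_cases (hcu.trans hj0)
  obtain ⟨y1, hy1, hcy1⟩ := pm_partner m hM false u
  have hy1' : y1 = u ∨ y1 = w := cell_cases hcy1.symm
  obtain ⟨y2, hy2, hcy2⟩ := pm_partner m hM false w
  have hy2' : y2 = w ∨ y2 = u := by
    rcases cell_cases hcy2.symm with h | h
    · exact Or.inl h
    · rw [h, hw, flipF_flipF]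
      exact Or.inr rfl
  rw [Bool.not_false] at hy1 hy2
  by_cases hbit : M.Adj (false, u) (true, u)
  · -- straight case
    have hstraight2 : M.Adj (false, w) (true, w) := by
      rcases hy2' with rfl | rfl
      · exact hy2
      · exfalso
        have := (matching_adj_iff' hM.1 hbit.symm (false, w)).mp hy2.symm
        exact huw (congrArg Prod.snd this)
    constructor
    · intro h
      have hG := M.adj_sub h
      rw [GG_adj] at hG
      refine ⟨hG.1, hG.2, iff_of_true ?_ hbit⟩
      have hc : c = !b := bool_resolve hG.1
      subst hc
      rcases hicases with hi | hi <;> rw [hi] at h ⊢ <;> cases b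
      · have := (matching_adj_iff' hM.1 hbit (!false, j)).mp h
        exact (congrArg Prod.snd this).symm
      · have := (matching_adj_iff' hM.1 hbit.symm (!true, j)).mp h
        exact (congrArg Prod.snd this).symm
      · have := (matching_adj_iff' hM.1 hstraight2 (!false, j)).mp h
        exact (congrArg Prod.snd this).symm
      · have := (matching_adj_iff' hM.1 hstraight2.symm (!true, j)).mp h
        exact (congrArg Prod.snd this).symm
    · rintro ⟨h1, h2, h3⟩
      obtain rfl : i = j := h3.mpr hbit
      obtain rfl : c = !b := bool_resolve h1
      rcases hicases with hi | hi <;> rw [hi] <;> cases b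
      · exact hbit
      · exact hbit.symm
      · exact hstraight2
      · exact hstraight2.symm
  · -- crossed case
    have hcross1 : M.Adj (false, u) (true, w) := by
      rcases hy1' with rfl | rfl
      · exact absurd hy1 hbit
      · exact hy1
    have hcross2 : M.Adj (false, w) (true, u) := by
      rcases hy2' with rfl | rfl
      · exfalso
        have := (matching_adj_iff' hM.1 hcross1.symm (false, w)).mp hy2.symm
        exact huw (congrArg Prod.snd this)
      · exact hy2
    constructor
    · intro h
      have hG := M.adj_sub h
      rw [GG_adj] at hG
      refine ⟨hG.1, hG.2, iff_of_false ?_ hbit⟩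
      have hc : c = !b := bool_resolve hG.1
      subst hc
      rcases hicases with hi | hi <;> rw [hi] at h ⊢ <;> cases b
      · have hjw : j = w := (Prod.ext_iff.mp ((matching_adj_iff' hM.1 hcross1 (!false, j)).mp h)).2
        rw [hjw]
        exact fun hh => huw hh.symm
      · have hjw : j = w := (Prod.ext_iff.mp ((matching_adj_iff' hM.1 hcross2.symm (!true, j)).mp h)).2
        rw [hjw]
        exact fun hh => huw hh.symm
      · have hju : j = u := (Prod.ext_iff.mp ((matching_adj_iff' hM.1 hcross2 (!false, j)).mp h)).2
        rw [hju]
        exact huw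
      · have hju : j = u := (Prod.ext_iff.mp ((matching_adj_iff' hM.1 hcross1.symm (!true, j)).mp h)).2
        rw [hju]
        exact huw
    · rintro ⟨h1, h2, h3⟩
      have hij : i ≠ j := fun h => hbit (h3.mp h)
      obtain rfl : c = !b := bool_resolve h1
      have hj : j = flipF m i := by
        rcases cell_cases h2 with h | h
        · exact absurd h.symm hij
        · exact h
      rcases hicases with hi | hi <;> rw [hj, hi] <;> cases b
      · rw [← hw]
        exact hcross1
      · rw [← hw]
        exact hcross2.symm
      · rw [hw, flipF_flipF]
        exact hcross2
      · rw [hw, flipF_flipF]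
        exact hcross1.symm

end Part2

open Classical in
noncomputable def pmEquiv (m : ℕ) :
    {M : (GG m).Subgraph // M.IsPerfectMatching} ≃ (Fin m → Bool) where
  toFun M j := decide (M.1.Adj (false, dblF m j) (true, dblF m j))
  invFun f := ⟨MF m f, MF_pm m f⟩
  left_inv := by
    rintro ⟨M, hM⟩
    apply Subtype.ext
    apply SimpleGraph.Subgraph.ext
    · exact (SimpleGraph.Subgraph.isSpanning_iff.mp hM.2).symm
    · ext ⟨b, i⟩ ⟨c, j⟩
      show (b ≠ c ∧ cellF m i = cellF m j ∧
        (i = j ↔ decide (M.Adj (false, dblF m (cellF m i)) (true, dblF m (cellF m i))) = true))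
        ↔ M.Adj (b, i) (c, j)
      rw [decide_eq_true_eq]
      exact (pm_adj m hM b i c j).symm
  right_inv := by
    intro f
    funext j
    have hiff : (MF m f).Adj (false, dblF m j) (true, dblF m j) ↔ (f j = true) := by
      constructor
      · rintro ⟨-, -, h3⟩
        have := h3.mp rfl
        rwa [cell_dbl] at this
      · intro hf
        exact ⟨by simp, rfl, iff_of_true rfl (by rw [cell_dbl]; exact hf)⟩
    show decide ((MF m f).Adj (false, dblF m j) (true, dblF m j)) = f j
    cases hf : f j
    · exact decide_eq_false fun h => by simpa [hf] using hiff.mp h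
    · exact decide_eq_true (hiff.mpr hf)

theorem part2 : ∀ n : ℕ, Even n →
    ∃ (V : Type) (_ : Fintype V) (G : SimpleGraph V) (A : Set V),
      (∀ v w, G.Adj v w → (v ∈ A ↔ w ∉ A)) ∧ A.ncard = n ∧ (Aᶜ : Set V).ncard = n ∧
      (∀ v, (G.neighborSet v).ncard ≤ 2) ∧
      Nat.card {M : G.Subgraph // M.IsPerfectMatching} = 2 ^ (n / 2) := by
  rintro n ⟨m, rfl⟩
  refine ⟨Bool × Fin (2 * m), inferInstance, GG m, {p | p.1 = false}, ?_, ?_, ?_, ?_, ?_⟩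
  · rintro ⟨b, i⟩ ⟨c, j⟩ ⟨h1, -⟩
    simp only [Set.mem_setOf_eq]
    cases b <;> cases c <;> simp_all
  · have himg : {p : Bool × Fin (2 * m) | p.1 = false} =
        (Prod.mk false) '' Set.univ := by
      ext ⟨b, i⟩
      constructor
      · intro hb
        obtain rfl : b = false := hb
        exact ⟨i, trivial, rfl⟩
      · rintro ⟨x, -, h⟩
        rw [← h]
        exact rfl
    have : ({p : Bool × Fin (2 * m) | p.1 = false}).ncard = 2 * m := by
      rw [himg, Set.ncard_image_of_injective _ (fun x y h => congrArg Prod.snd h),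
        Set.ncard_univ, Nat.card_eq_fintype_card, Fintype.card_fin]
    omega
  · have hc : ({p : Bool × Fin (2 * m) | p.1 = false}ᶜ : Set (Bool × Fin (2 * m))) =
        (Prod.mk true) '' Set.univ := by
      ext ⟨b, i⟩
      constructor
      · intro hb
        have : ¬ (b = false) := hb
        obtain rfl : b = true := by cases b <;> simp_all
        exact ⟨i, trivial, rfl⟩
      · rintro ⟨x, -, h⟩
        rw [← h]
        simp only [Set.mem_compl_iff, Set.mem_setOf_eq]
        simp
    have : ({p : Bool × Fin (2 * m) | p.1 = false}ᶜ : Set (Bool × Fin (2 * m))).ncard = 2 * m := by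
      rw [hc, Set.ncard_image_of_injective _ (fun x y h => congrArg Prod.snd h),
        Set.ncard_univ, Nat.card_eq_fintype_card, Fintype.card_fin]
    omega
  · rintro ⟨b, i⟩
    have hsub : (GG m).neighborSet (b, i) ⊆ {(!b, i), (!b, flipF m i)} := by
      rintro ⟨c, j⟩ ⟨h1, h2⟩
      obtain rfl : c = !b := bool_resolve h1
      rcases cell_cases h2 with rfl | rfl
      · exact Or.inl rfl
      · exact Or.inr rfl
    calc ((GG m).neighborSet (b, i)).ncard ≤ _ := Set.ncard_le_ncard hsub (Set.toFinite _)
      _ ≤ 2 := le_trans (Set.ncard_insert_le _ _) (by simp)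
  · rw [Nat.card_congr (pmEquiv m), Nat.card_eq_fintype_card]
    have h2 : (m + m) / 2 = m := by omega
    rw [h2]
    simp [Fintype.card_fun]

/-- The number of perfect matchings of a bipartite graph with parts of size `n` and maximum
degree at most 2 is at most `2 ^ ⌊n/2⌋`, and this bound is attained for every even `n`. -/
theorem stmt_7 :
    (∀ (V : Type) (_ : Fintype V) (G : SimpleGraph V) (A : Set V) (n : ℕ),
      (∀ v w, G.Adj v w → (v ∈ A ↔ w ∉ A)) → A.ncard = n → (Aᶜ : Set V).ncard = n →
      (∀ v, (G.neighborSet v).ncard ≤ 2) →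
      Nat.card {M : G.Subgraph // M.IsPerfectMatching} ≤ 2 ^ (n / 2)) ∧
    (∀ n : ℕ, Even n →
      ∃ (V : Type) (_ : Fintype V) (G : SimpleGraph V) (A : Set V),
        (∀ v w, G.Adj v w → (v ∈ A ↔ w ∉ A)) ∧ A.ncard = n ∧ (Aᶜ : Set V).ncard = n ∧
        (∀ v, (G.neighborSet v).ncard ≤ 2) ∧
        Nat.card {M : G.Subgraph // M.IsPerfectMatching} = 2 ^ (n / 2)) := by
  constructor
  · intro V fV G A n hbip hA hAc hdeg
    have hset : {M : G.Subgraph | M.IsPerfectMatching} =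
        {M : G.Subgraph | M.IsMatching ∧ M.verts = Set.univ} := by
      ext M
      exact and_congr_right fun _ => SimpleGraph.Subgraph.isSpanning_iff
    calc Nat.card {M : G.Subgraph // M.IsPerfectMatching}
        = ({M : G.Subgraph | M.IsPerfectMatching}).ncard := Nat.card_coe_set_eq _
      _ ≤ 2 ^ (n / 2) := by
          rw [hset]
          exact key hbip hdeg n Set.univ (by rwa [Set.univ_inter])
            (by rwa [← Set.compl_eq_univ_diff])
  · exact part2
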